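/- arXiv:2109.07433 — 3 statements merged into one kernel-verified Lean document; each statement's English description precedes it below -/
import Mathlib

section
/- With P_m and A_m defined as counting functions of lattice points (P_m(Z) = |{(s',Δ_1,…,Δ_m) ∈ ℕ^{m+1} : s' + Σ Δ_n 2^{n-1} ≤ Z}| and A_m(Y) = |{(Δ_1,…,Δ_m) ∈ ℕ^m : Σ Δ_n 2^{n-1} ≤ Y}|), it holds that 2 · P_m(Z) = A_{m+1}(2Z + 1) for all m ≥ 1 and Z ∈ ℕ. -/
/-- Number of tuples `(Δ_1,…,Δ_m) ∈ ℕ^m` with `Σ Δ_n 2^{n-1} ≤ Y`. -/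
noncomputable def A (m Y : ℕ) : ℕ :=
  Nat.card {f : Fin m → ℕ // ∑ n : Fin m, f n * 2 ^ (n : ℕ) ≤ Y}

/-- Number of tuples `(s',Δ_1,…,Δ_m) ∈ ℕ^{m+1}` with `s' + Σ Δ_n 2^{n-1} ≤ Z`. -/
noncomputable def P (m Z : ℕ) : ℕ :=
  Nat.card {p : ℕ × (Fin m → ℕ) // p.1 + ∑ n : Fin m, p.2 n * 2 ^ (n : ℕ) ≤ Z}

lemma sum_succ_aux {m : ℕ} (f : Fin (m + 1) → ℕ) :
    ∑ n : Fin (m + 1), f n * 2 ^ (n : ℕ)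
      = f 0 + 2 * ∑ n : Fin m, f n.succ * 2 ^ (n : ℕ) := by
  rw [Fin.sum_univ_succ, Finset.mul_sum]
  simp only [Fin.val_zero, pow_zero, mul_one, Fin.val_succ, pow_succ]
  congr 1
  apply Finset.sum_congr rfl
  intro i _
  ring

theorem stmt3 (m Z : ℕ) (hm : 1 ≤ m) :
    2 * P m Z = A (m + 1) (2 * Z + 1) := by
  have e : Bool × {p : ℕ × (Fin m → ℕ) // p.1 + ∑ n : Fin m, p.2 n * 2 ^ (n : ℕ) ≤ Z}
      ≃ {f : Fin (m + 1) → ℕ // ∑ n : Fin (m + 1), f n * 2 ^ (n : ℕ) ≤ 2 * Z + 1} := by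
    refine ⟨fun x => ⟨Fin.cons (2 * x.2.1.1 + (if x.1 then 1 else 0)) x.2.1.2, ?_⟩,
      fun f => (decide (f.1 0 % 2 = 1), ⟨(f.1 0 / 2, Fin.tail f.1), ?_⟩), ?_, ?_⟩
    · have h := x.2.2
      rw [sum_succ_aux]
      simp only [Fin.cons_zero, Fin.cons_succ]
      rcases x.1 with _ | _ <;> simp <;> omega
    · have h := f.2
      rw [sum_succ_aux] at h
      simp only [Fin.tail]
      omega
    · rintro ⟨b, ⟨⟨s, d⟩, h⟩⟩
      rcases b with _ | _ <;>
        · simp only [Fin.cons_zero]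
        
          refine Prod.ext (by simp; try omega) (Subtype.ext (Prod.ext (by simp; try omega) ?_))
          funext i
          simp [Fin.tail]
    · rintro ⟨f, h⟩
      refine Subtype.ext (funext fun i => ?_)
      refine Fin.cases ?_ (fun j => ?_) i
      · simp only [Fin.cons_zero]
        rcases Nat.even_or_odd (f 0) with he | ho
        · have : f 0 % 2 = 0 := Nat.even_iff.mp he
          simp [this]; omega
        · have : f 0 % 2 = 1 := Nat.odd_iff.mp ho
          simp [this]; omega
      · simp [Fin.tail]
  have := Nat.card_congr e
  rw [Nat.card_prod, Nat.card_eq_fintype_card (α := Bool)] at this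
  simpa [P, A] using this
end

section
/- Let a be a unimodular complex sequence of length L (|a_i| = 1 for all i) that is a complementary sequence, i.e., there exists a sequence b with |b_i| ≤ 1 such that ρ_a(k) + ρ_b(k) = 0 for all k ≠ 0. Then for all z on the unit circle, |A(z)|² ≤ 2L, where A(z) = Σ_{i=0}^{L-1} a_i z^i; consequently the PMEPR of a, defined as max_{|z|=1} |A(z)|² / ρ_a(0), is at most 2. -/
open Finset

/-- Aperiodic autocorrelation of a length-`L` complex sequence `a` at shift `k ≥ 0`. -/
noncomputable def aacf (L : ℕ) (a : ℕ → ℂ) (k : ℕ) : ℂ :=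
  ∑ i ∈ Finset.range (L - k), (starRingEnd ℂ) (a i) * a (i + k)

/-- Polynomial `A(z) = Σ_{i<L} a_i z^i` associated with a sequence. -/
noncomputable def seqPoly (L : ℕ) (a : ℕ → ℂ) (z : ℂ) : ℂ :=
  ∑ i ∈ Finset.range L, a i * z ^ i

lemma tri (L : ℕ) (F : ℕ → ℕ → ℂ) :
    ∑ p ∈ (range L) ×ˢ (range L), F p.1 p.2
    = (∑ k ∈ range L, ∑ i ∈ range (L - k), F i (i + k))
      + ∑ k ∈ Ico 1 L, ∑ i ∈ range (L - k), F (i + k) i := by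
  rw [← Finset.sum_filter_add_sum_filter_not ((range L) ×ˢ (range L)) (fun p => p.1 ≤ p.2)]
  congr 1
  · rw [Finset.sum_sigma']
    refine Finset.sum_nbij' (i := fun p => (⟨p.2 - p.1, p.1⟩ : (_ : ℕ) × ℕ))
      (j := fun p => (p.2, p.2 + p.1)) ?_ ?_ ?_ ?_ ?_
    · rintro ⟨i, j⟩ h
      simp only [mem_filter, mem_product, mem_range] at h
      simp only [mem_sigma, mem_range]
      omega
    · rintro ⟨k, i⟩ h
      simp only [mem_sigma, mem_range] at h
      simp only [mem_filter, mem_product, mem_range]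
      omega
    · rintro ⟨i, j⟩ h
      simp only [mem_filter, mem_product, mem_range] at h
      simp only [Prod.mk.injEq, true_and, and_true, eq_self_iff_true]
      omega
    · rintro ⟨k, i⟩ h
      simp only [mem_sigma, mem_range] at h
      simp only
      congr 1 <;> omega
    · rintro ⟨i, j⟩ h
      simp only [mem_filter, mem_product, mem_range] at h
      simp only
      congr 1
      omega
  · rw [Finset.sum_sigma']
    refine Finset.sum_nbij' (i := fun p => (⟨p.1 - p.2, p.2⟩ : (_ : ℕ) × ℕ))
      (j := fun p => (p.2 + p.1, p.2)) ?_ ?_ ?_ ?_ ?_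
    · rintro ⟨i, j⟩ h
      simp only [mem_filter, mem_product, mem_range, not_le] at h
      simp only [mem_sigma, mem_Ico, mem_range]
      omega
    · rintro ⟨k, i⟩ h
      simp only [mem_sigma, mem_Ico, mem_range] at h
      simp only [mem_filter, mem_product, mem_range, not_le]
      omega
    · rintro ⟨i, j⟩ h
      simp only [mem_filter, mem_product, mem_range, not_le] at h
      simp only [Prod.mk.injEq, true_and, and_true, eq_self_iff_true]
      omega
    · rintro ⟨k, i⟩ h
      simp only [mem_sigma, mem_Ico, mem_range] at h
      simp only
      congr 1 <;> omega
    · rintro ⟨i, j⟩ h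
      simp only [mem_filter, mem_product, mem_range, not_le] at h
      simp only
      congr 1
      omega

lemma key (L : ℕ) (a : ℕ → ℂ) (z : ℂ) (hz : ‖z‖ = 1) :
    (starRingEnd ℂ) (seqPoly L a z) * seqPoly L a z
    = (∑ k ∈ range L, aacf L a k * z ^ k)
      + (starRingEnd ℂ) (∑ k ∈ Ico 1 L, aacf L a k * z ^ k) := by
  have hz1 : (starRingEnd ℂ) z * z = 1 := by
    rw [mul_comm, Complex.mul_conj]
    norm_cast
    rw [Complex.normSq_eq_norm_sq, hz, one_pow]
  have hconj : (starRingEnd ℂ) (seqPoly L a z)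
      = ∑ i ∈ range L, (starRingEnd ℂ) (a i) * ((starRingEnd ℂ) z) ^ i := by
    simp [seqPoly, map_sum, map_mul, map_pow]
  rw [hconj, seqPoly, Finset.sum_mul_sum, ← Finset.sum_product']
  rw [tri L (fun i j => (starRingEnd ℂ) (a i) * ((starRingEnd ℂ) z) ^ i * (a j * z ^ j))]
  congr 1
  · refine Finset.sum_congr rfl fun k _ => ?_
    rw [aacf, Finset.sum_mul]
    refine Finset.sum_congr rfl fun i _ => ?_
    have : ((starRingEnd ℂ) z) ^ i * z ^ (i + k) = z ^ k := by
      rw [pow_add, ← mul_assoc, ← mul_pow, hz1, one_pow, one_mul]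
    calc (starRingEnd ℂ) (a i) * ((starRingEnd ℂ) z) ^ i * (a (i + k) * z ^ (i + k))
        = (starRingEnd ℂ) (a i) * a (i + k) * (((starRingEnd ℂ) z) ^ i * z ^ (i + k)) := by ring
      _ = (starRingEnd ℂ) (a i) * a (i + k) * z ^ k := by rw [this]
  · rw [map_sum]
    refine Finset.sum_congr rfl fun k _ => ?_
    rw [aacf, map_mul, map_sum, Finset.sum_mul]
    refine Finset.sum_congr rfl fun i _ => ?_
    have hz2 : z * (starRingEnd ℂ) z = 1 := by rw [mul_comm]; exact hz1
    have : ((starRingEnd ℂ) z) ^ (i + k) * z ^ i = ((starRingEnd ℂ) z) ^ k := by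
      rw [pow_add, mul_assoc, mul_comm (((starRingEnd ℂ) z) ^ i), mul_assoc, ← mul_pow, hz2,
        one_pow, mul_one]
    calc (starRingEnd ℂ) (a (i + k)) * ((starRingEnd ℂ) z) ^ (i + k) * (a i * z ^ i)
        = a i * (starRingEnd ℂ) (a (i + k)) * (((starRingEnd ℂ) z) ^ (i + k) * z ^ i) := by ring
      _ = (starRingEnd ℂ) ((starRingEnd ℂ) (a i) * a (i + k)) * ((starRingEnd ℂ) z) ^ k := by
          rw [this, map_mul, Complex.conj_conj]
      _ = (starRingEnd ℂ) ((starRingEnd ℂ) (a i) * a (i + k)) * (starRingEnd ℂ) (z ^ k) := by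
          rw [map_pow]

lemma norm_sq_eq (L : ℕ) (hL : 1 ≤ L) (a : ℕ → ℂ) (z : ℂ) (hz : ‖z‖ = 1) :
    (‖seqPoly L a z‖ : ℝ) ^ 2
    = (aacf L a 0).re + 2 * (∑ k ∈ Ico 1 L, aacf L a k * z ^ k).re := by
  have h1 : (‖seqPoly L a z‖ : ℝ) ^ 2
      = ((starRingEnd ℂ) (seqPoly L a z) * seqPoly L a z).re := by
    rw [mul_comm, Complex.mul_conj]
    rw [Complex.ofReal_re, Complex.normSq_eq_norm_sq]
  rw [h1, key L a z hz]
  have h2 : ∑ k ∈ range L, aacf L a k * z ^ k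
      = aacf L a 0 * z ^ 0 + ∑ k ∈ Ico 1 L, aacf L a k * z ^ k := by
    rw [Finset.range_eq_Ico, Finset.sum_eq_sum_Ico_succ_bot (by omega)]
  rw [h2, Complex.add_re, Complex.add_re, Complex.conj_re, pow_zero, mul_one]
  ring

theorem stmt8 (L : ℕ) (hL : 1 ≤ L) (a b : ℕ → ℂ)
    (ha : ∀ i < L, ‖a i‖ = 1)
    (hb : ∀ i < L, ‖b i‖ ≤ 1)
    (hGolay : ∀ k : ℕ, k ≠ 0 → aacf L a k + aacf L b k = 0) :
    ∀ z : ℂ, ‖z‖ = 1 →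
      ‖seqPoly L a z‖ ^ 2 ≤ 2 * L ∧
      ‖seqPoly L a z‖ ^ 2 / (aacf L a 0).re ≤ 2 := by
  intro z hz
  have hA := norm_sq_eq L hL a z hz
  have hB := norm_sq_eq L hL b z hz
  have hS : (∑ k ∈ Ico 1 L, aacf L a k * z ^ k) + ∑ k ∈ Ico 1 L, aacf L b k * z ^ k = 0 := by
    rw [← Finset.sum_add_distrib]
    refine Finset.sum_eq_zero fun k hk => ?_
    have hk1 : k ≠ 0 := by
      have := Finset.mem_Ico.mp hk; omega
    rw [← add_mul, hGolay k hk1, zero_mul]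
  have hSre : (∑ k ∈ Ico 1 L, aacf L a k * z ^ k).re
      + (∑ k ∈ Ico 1 L, aacf L b k * z ^ k).re = 0 := by
    rw [← Complex.add_re, hS, Complex.zero_re]
  have ha0 : (aacf L a 0).re = (L : ℝ) := by
    rw [aacf]
    simp only [Nat.sub_zero, Nat.add_zero]
    rw [Complex.re_sum]
    have : ∀ i ∈ range L, ((starRingEnd ℂ) (a i) * a i).re = 1 := by
      intro i hi
      rw [mul_comm, Complex.mul_conj]
      simp [Complex.normSq_eq_norm_sq, ha i (Finset.mem_range.mp hi)]
    rw [Finset.sum_congr rfl this]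
    simp
  have hb0 : (aacf L b 0).re ≤ (L : ℝ) := by
    rw [aacf]
    simp only [Nat.sub_zero, Nat.add_zero]
    rw [Complex.re_sum]
    calc ∑ i ∈ range L, ((starRingEnd ℂ) (b i) * b i).re
        ≤ ∑ i ∈ range L, (1 : ℝ) := by
          refine Finset.sum_le_sum fun i hi => ?_
          rw [mul_comm, Complex.mul_conj]
          simp only [Complex.ofReal_re, Complex.normSq_eq_norm_sq]
          nlinarith [hb i (Finset.mem_range.mp hi), norm_nonneg (b i)]
      _ = (L : ℝ) := by simp
  have hBnn : (0 : ℝ) ≤ ‖seqPoly L b z‖ ^ 2 := sq_nonneg _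
  have h2L : ‖seqPoly L a z‖ ^ 2 ≤ 2 * (L : ℝ) := by nlinarith
  refine ⟨h2L, ?_⟩
  rw [ha0, div_le_iff₀ (by positivity : (0 : ℝ) < (L : ℝ))]
  linarith
end

section
/- Let m ≥ 1 and suppose non-negative integers d_1, …, d_m satisfy d_ℓ ≥ Σ_{i=ℓ+1}^m d_i for 1 ≤ ℓ ≤ m−1. Define f_s: ℤ_2^m → ℕ by f_s(x) = Σ_{n=1}^m d_n x_n. Then the map i ↦ i + f̌_s(i) from {0, 1, …, 2^m − 1} to ℕ is strictly increasing (hence injective), where f̌_s(i) = f_s(x) with x the binary expansion of i (x_1 the most significant bit). -/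
theorem aux_le17 (m : ℕ) (d : Fin m → ℕ)
    (hns : ∀ ℓ : Fin m, (ℓ : ℕ) + 1 < m →
      ∑ i ∈ Finset.univ.filter (fun i => ℓ < i), d i ≤ d ℓ)
    (i : ℕ) (hi : i + 1 < 2 ^ m) :
    ∑ n : Fin m, d n * (i / 2 ^ (m - 1 - (n : ℕ)) % 2) ≤
      ∑ n : Fin m, d n * ((i + 1) / 2 ^ (m - 1 - (n : ℕ)) % 2) := by
  have hm : 0 < m := by
    rcases Nat.eq_zero_or_pos m with h | h
    · subst h; simp at hi
    · exact h
  set p := (i + 1).factorization 2 with hp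
  have hi1 : (0:ℕ) < i + 1 := Nat.succ_pos i
  have hdvd : 2 ^ p ∣ i + 1 := Nat.ordProj_dvd _ _
  have hndvd : ¬ 2 ^ (p + 1) ∣ i + 1 :=
    Nat.pow_succ_factorization_not_dvd (Nat.succ_ne_zero i) (by norm_num)
  obtain ⟨q, hq⟩ := hdvd
  have hq1 : 1 ≤ q := by
    rcases Nat.eq_zero_or_pos q with h | h
    · subst h; simp at hq
    · exact h
  have hqodd : q % 2 = 1 := by
    rcases Nat.even_or_odd q with he | ho
    · exfalso
      obtain ⟨r, hr⟩ := he
      exact hndvd ⟨r, by rw [hq, hr]; ring⟩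
    · exact Nat.odd_iff.mp ho
  have hplt : p < m := by
    have h1 : 2 ^ p ≤ i + 1 := Nat.le_of_dvd hi1 ⟨q, hq⟩
    have h2 : 2 ^ p < 2 ^ m := lt_of_le_of_lt h1 hi
    exact (Nat.pow_lt_pow_iff_right one_lt_two).mp h2
  set L : Fin m := ⟨m - 1 - p, by omega⟩ with hLdef
  have hLval : (L : ℕ) = m - 1 - p := rfl
  have hdivlow : ∀ e : ℕ, e ≤ p →
      i / 2 ^ e = 2 ^ (p - e) * q - 1 ∧ (i + 1) / 2 ^ e = 2 ^ (p - e) * q := by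
    intro e he
    have h2e : 0 < 2 ^ e := pow_pos two_pos e
    obtain ⟨K', hK'⟩ : ∃ K', 2 ^ (p - e) * q = K' + 1 := by
      have hKpos : 1 ≤ 2 ^ (p - e) * q :=
        Nat.one_le_iff_ne_zero.mpr (by positivity)
      exact ⟨2 ^ (p - e) * q - 1, by omega⟩
    have hi1e : i + 1 = 2 ^ e * (K' + 1) := by
      rw [hq, ← hK', ← mul_assoc, ← pow_add]
      congr 2
      omega
    have hma : 2 ^ e * (K' + 1) = 2 ^ e * K' + 2 ^ e := by ring
    have hie : i = 2 ^ e * K' + (2 ^ e - 1) := by omega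
    constructor
    · rw [hie, Nat.mul_add_div h2e, Nat.div_eq_of_lt (by omega)]
      omega
    · rw [hi1e, Nat.mul_div_cancel_left _ h2e]
      omega
  have hdivhigh : ∀ e : ℕ, p < e → (i + 1) / 2 ^ e = i / 2 ^ e := by
    intro e he
    rw [Nat.succ_div]
    have hnd : ¬ 2 ^ e ∣ i + 1 := fun h =>
      hndvd (dvd_trans (pow_dvd_pow 2 (by omega)) h)
    simp [hnd]
  have hterm : ∀ n : Fin m,
      d n * (i / 2 ^ (m - 1 - (n : ℕ)) % 2) + d n * (if n = L then 1 else 0)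
        = d n * ((i + 1) / 2 ^ (m - 1 - (n : ℕ)) % 2)
          + d n * (if L < n then 1 else 0) := by
    intro n
    have hn : (n : ℕ) < m := n.isLt
    rcases lt_trichotomy ((n : ℕ)) ((L : ℕ)) with h | h | h
    · have hne : ¬ n = L := by
        intro hEq; rw [hEq] at h; exact lt_irrefl _ h
      have hnlt : ¬ L < n := by
        intro hlt
        have := Fin.lt_def.mp hlt
        omega
      have he : p < m - 1 - (n : ℕ) := by omega
      rw [hdivhigh _ he]
      simp [hne, hnlt]
    · have hEq : n = L := Fin.ext h
      have hep : m - 1 - (n : ℕ) = p := by omega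
      obtain ⟨h1, h2⟩ := hdivlow p le_rfl
      rw [hep, h1, h2]
      simp only [Nat.sub_self, pow_zero, one_mul]
      have hq2 : (q - 1) % 2 = 0 := by omega
      rw [hq2, hqodd]
      simp [hEq]
    · have hne : ¬ n = L := by
        intro hEq; rw [hEq] at h; exact lt_irrefl _ h
      have hlt : L < n := Fin.lt_def.mpr h
      have he : m - 1 - (n : ℕ) < p := by omega
      obtain ⟨h1, h2⟩ := hdivlow (m - 1 - (n : ℕ)) (le_of_lt he)
      rw [h1, h2]
      have hdvd2 : 2 ∣ 2 ^ (p - (m - 1 - (n : ℕ))) * q :=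
        Dvd.dvd.mul_right (dvd_pow_self 2 (by omega)) q
      obtain ⟨r, hr⟩ := hdvd2
      have hKpos : 1 ≤ 2 ^ (p - (m - 1 - (n : ℕ))) * q :=
        Nat.one_le_iff_ne_zero.mpr (by positivity)
      have e1 : (2 ^ (p - (m - 1 - (n : ℕ))) * q - 1) % 2 = 1 := by omega
      have e2 : (2 ^ (p - (m - 1 - (n : ℕ))) * q) % 2 = 0 := by omega
      rw [e1, e2]
      simp [hne, hlt]
  have hsum : (∑ n : Fin m, d n * (i / 2 ^ (m - 1 - (n : ℕ)) % 2))
        + (∑ n : Fin m, d n * (if n = L then 1 else 0))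
      = (∑ n : Fin m, d n * ((i + 1) / 2 ^ (m - 1 - (n : ℕ)) % 2))
        + (∑ n : Fin m, d n * (if L < n then 1 else 0)) := by
    rw [← Finset.sum_add_distrib, ← Finset.sum_add_distrib]
    exact Finset.sum_congr rfl fun n _ => hterm n
  have hsL : (∑ n : Fin m, d n * (if n = L then 1 else 0)) = d L := by
    simp [mul_ite]
  have hsT : (∑ n : Fin m, d n * (if L < n then 1 else 0))
      = ∑ n ∈ Finset.univ.filter (fun n => L < n), d n := by
    rw [Finset.sum_filter]
    simp [mul_ite]
  have hT : (∑ n ∈ Finset.univ.filter (fun n => L < n), d n) ≤ d L := by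
    by_cases hc : (L : ℕ) + 1 < m
    · exact hns L hc
    · have hfe : Finset.univ.filter (fun n : Fin m => L < n) = ∅ := by
        apply Finset.eq_empty_of_forall_notMem
        intro n hn
        rw [Finset.mem_filter] at hn
        have h1 := Fin.lt_def.mp hn.2
        have h2 := n.isLt
        omega
      rw [hfe]
      simp
  omega

theorem stmt17 (m : ℕ) (hm : 1 ≤ m) (d : Fin m → ℕ)
    (hns : ∀ ℓ : Fin m, (ℓ : ℕ) + 1 < m →
      ∑ i ∈ Finset.univ.filter (fun i => ℓ < i), d i ≤ d ℓ) :
    StrictMonoOn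
      (fun i : ℕ => i + ∑ n : Fin m, d n * (i / 2 ^ (m - 1 - (n : ℕ)) % 2))
      (Set.Iio (2 ^ m)) := by
  intro a ha b hb hab
  simp only [Set.mem_Iio] at ha hb
  have main : ∀ c : ℕ, a + 1 ≤ c → c < 2 ^ m →
      a + (∑ n : Fin m, d n * (a / 2 ^ (m - 1 - (n : ℕ)) % 2))
        < c + (∑ n : Fin m, d n * (c / 2 ^ (m - 1 - (n : ℕ)) % 2)) := by
    intro c hc
    induction c, hc using Nat.le_induction with
    | base =>
      intro h
      have := aux_le17 m d hns a h
      omega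
    | succ c hc ih =>
      intro h
      have h1 := ih (by omega)
      have h2 := aux_le17 m d hns c h
      omega
  exact main b hab hb
end
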